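/- Let g : ℝⁿ → ℝ be convex and L-smooth with constant L_{∇g} > 0, let λ ∈ ℝ, α ≥ 0 and z ∈ ℝ^d. Let x̂₁, x̂₂, x̃₁, x̃₂ ∈ ℝⁿ and ε₁, ε₂ ≥ 0 with ‖x̂₁ − x̃₁‖ ≤ ε₁ and ‖x̂₂ − x̃₂‖ ≤ ε₂. Define Ū(x, ε) = g(x) + ‖∇g(x)‖ ε + (L_{∇g}/2) ε², U̲(x, ε) = g(x) − ‖∇g(x)‖ ε − (L_{∇g}/2) ε², ψ(α) = Ū(x̃₂, ε₂) − U̲(x̃₁, ε₁) + λ α ‖z‖², and ψ̃(α) = ψ(α) − (L_{∇g}/2) ε₁². If ψ̃(α) ≤ 0, then g(x̂₂) − g(x̂₁) ≤ −λ α ‖z‖². -/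

import Mathlib

open InnerProductSpace

lemma aux_hasDerivAt {E : Type*} [NormedAddCommGroup E] [InnerProductSpace ℝ E] [CompleteSpace E]
    {g : E → ℝ} (hdiff : Differentiable ℝ g) (x v : E) (t : ℝ) :
    HasDerivAt (fun s : ℝ => g (x + s • v)) (inner ℝ (gradient g (x + t • v)) v : ℝ) t := by
  have h1 : HasDerivAt (fun s : ℝ => x + s • v) v t := by
    simpa using ((hasDerivAt_id t).smul_const v).const_add x
  have h2 := ((hdiff (x + t • v)).hasGradientAt.hasFDerivAt).comp_hasDerivAt t h1
  rw [inner_gradient_left, ← toDual_gradient]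
  exact h2

lemma aux_convex_lb {E : Type*} [NormedAddCommGroup E] [InnerProductSpace ℝ E] [CompleteSpace E]
    {g : E → ℝ} (hconv : ConvexOn ℝ Set.univ g) (hdiff : Differentiable ℝ g) (x y : E) :
    g x + inner ℝ (gradient g x) (y - x) ≤ g y := by
  set v := y - x with hv
  have hc : ConvexOn ℝ Set.univ (fun t : ℝ => g (x + t • v)) := by
    have haff := hconv.comp_affineMap (AffineMap.lineMap x y)
    have key : (g ∘ ⇑(AffineMap.lineMap x y)) = fun t : ℝ => g (x + t • v) :=
      funext fun t => by
        simp only [Function.comp, AffineMap.lineMap_apply_module, hv]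
        congr 1
        module
    rw [key, Set.preimage_univ] at haff
    exact haff
  have hd := aux_hasDerivAt hdiff x v 0
  simp only [zero_smul, add_zero] at hd
  have := hc.le_slope_of_hasDerivAt (Set.mem_univ (0:ℝ)) (Set.mem_univ (1:ℝ)) zero_lt_one hd
  simp [slope_def_field] at this
  have h1 : x + v = y := by simp [hv]
  rw [h1] at this
  linarith [this, inner_gradient_left (f := g) (x := x) (y := v)]

lemma aux_descent {E : Type*} [NormedAddCommGroup E] [InnerProductSpace ℝ E] [CompleteSpace E]
    {g : E → ℝ} {Lg : ℝ} (hLg : 0 < Lg) (hdiff : Differentiable ℝ g)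
    (hlip : ∀ x y, ‖gradient g x - gradient g y‖ ≤ Lg * ‖x - y‖) (x y : E) :
    g y ≤ g x + inner ℝ (gradient g x) (y - x) + Lg / 2 * ‖y - x‖ ^ 2 := by
  set v := y - x with hv
  set F : ℝ → ℝ := fun t => Lg / 2 * t ^ 2 * ‖v‖ ^ 2 + t * inner ℝ (gradient g x) v + g x
      - g (x + t • v) with hF
  have hF' : ∀ t, HasDerivAt F
      (Lg * t * ‖v‖ ^ 2 + inner ℝ (gradient g x) v - inner ℝ (gradient g (x + t • v)) v) t := by
    intro t
    have h1 : HasDerivAt (fun t : ℝ => Lg / 2 * t ^ 2 * ‖v‖ ^ 2 + t * inner ℝ (gradient g x) v + g x)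
        (Lg * t * ‖v‖ ^ 2 + inner ℝ (gradient g x) v) t := by
      have h0 : HasDerivAt (fun t : ℝ => Lg / 2 * t ^ 2 * ‖v‖ ^ 2)
          (Lg / 2 * ((2:ℕ) * t ^ (2-1)) * ‖v‖ ^ 2) t :=
        ((hasDerivAt_pow 2 t).const_mul (Lg / 2)).mul_const (‖v‖ ^ 2)
      have h2 := (h0.add ((hasDerivAt_id t).mul_const (inner ℝ (gradient g x) v : ℝ))).add_const (g x)
      refine h2.congr_deriv ?_
      push_cast
      ring
    exact h1.sub (aux_hasDerivAt hdiff x v t)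
  have hcont : Continuous F := by
    have : Differentiable ℝ F := fun t => (hF' t).differentiableAt
    exact this.continuous
  have hmono : MonotoneOn F (Set.Icc 0 1) := by
    apply monotoneOn_of_deriv_nonneg (convex_Icc 0 1) hcont.continuousOn
    · exact fun t _ => (hF' t).differentiableAt.differentiableWithinAt
    · intro t ht
      rw [interior_Icc] at ht
      rw [(hF' t).deriv]
      have hinner : inner ℝ (gradient g (x + t • v)) v - inner ℝ (gradient g x) v
          ≤ Lg * t * ‖v‖ ^ 2 := by
        have h1 : (inner ℝ (gradient g (x + t • v)) v : ℝ) - inner ℝ (gradient g x) v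
            = inner ℝ (gradient g (x + t • v) - gradient g x) v := by
          rw [inner_sub_left]
        rw [h1]
        calc (inner ℝ (gradient g (x + t • v) - gradient g x) v : ℝ)
            ≤ ‖gradient g (x + t • v) - gradient g x‖ * ‖v‖ := real_inner_le_norm _ _
          _ ≤ Lg * ‖(x + t • v) - x‖ * ‖v‖ := by
              have := hlip (x + t • v) x
              nlinarith [norm_nonneg v]
          _ = Lg * t * ‖v‖ ^ 2 := by
              rw [add_sub_cancel_left, norm_smul, Real.norm_eq_abs, abs_of_pos ht.1]
              ring
      linarith
  have h01 := hmono (Set.left_mem_Icc.2 zero_le_one) (Set.right_mem_Icc.2 zero_le_one) zero_le_one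
  have hF0 : F 0 = 0 := by simp [hF]
  have hF1 : F 1 = Lg / 2 * ‖v‖ ^ 2 + inner ℝ (gradient g x) v + g x - g y := by
    simp [hF, hv]
  rw [hF0, hF1] at h01
  linarith

theorem inexact_line_search_sufficient_decrease_convex
    {n d : ℕ} (g : EuclideanSpace ℝ (Fin n) → ℝ) (Lg : ℝ) (hLg : 0 < Lg)
    (hconv : ConvexOn ℝ Set.univ g)
    (hdiff : Differentiable ℝ g)
    (hlip : ∀ x y, ‖gradient g x - gradient g y‖ ≤ Lg * ‖x - y‖)
    (lam α : ℝ) (hα : 0 ≤ α) (z : EuclideanSpace ℝ (Fin d))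
    (xhat₁ xhat₂ xtilde₁ xtilde₂ : EuclideanSpace ℝ (Fin n))
    (ε₁ ε₂ : ℝ) (hε₁ : 0 ≤ ε₁) (hε₂ : 0 ≤ ε₂)
    (happrox₁ : ‖xhat₁ - xtilde₁‖ ≤ ε₁) (happrox₂ : ‖xhat₂ - xtilde₂‖ ≤ ε₂)
    (hψt : ((g xtilde₂ + ‖gradient g xtilde₂‖ * ε₂ + Lg / 2 * ε₂ ^ 2)
        - (g xtilde₁ - ‖gradient g xtilde₁‖ * ε₁ - Lg / 2 * ε₁ ^ 2)
        + lam * α * ‖z‖ ^ 2) - Lg / 2 * ε₁ ^ 2 ≤ 0) :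
    g xhat₂ - g xhat₁ ≤ -(lam * α * ‖z‖ ^ 2) := by
  have hub : g xhat₂ ≤ g xtilde₂ + ‖gradient g xtilde₂‖ * ε₂ + Lg / 2 * ε₂ ^ 2 := by
    have h1 := aux_descent hLg hdiff hlip xtilde₂ xhat₂
    have h2 : (inner ℝ (gradient g xtilde₂) (xhat₂ - xtilde₂) : ℝ)
        ≤ ‖gradient g xtilde₂‖ * ε₂ := by
      calc (inner ℝ (gradient g xtilde₂) (xhat₂ - xtilde₂) : ℝ)
          ≤ ‖gradient g xtilde₂‖ * ‖xhat₂ - xtilde₂‖ := real_inner_le_norm _ _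
        _ ≤ ‖gradient g xtilde₂‖ * ε₂ := by
            exact mul_le_mul_of_nonneg_left happrox₂ (norm_nonneg _)
    have h3 : ‖xhat₂ - xtilde₂‖ ^ 2 ≤ ε₂ ^ 2 := by
      exact pow_le_pow_left₀ (norm_nonneg _) happrox₂ 2
    nlinarith [norm_nonneg (xhat₂ - xtilde₂)]
  have hlb : g xtilde₁ - ‖gradient g xtilde₁‖ * ε₁ ≤ g xhat₁ := by
    have h1 := aux_convex_lb hconv hdiff xtilde₁ xhat₁
    have h2 : -(‖gradient g xtilde₁‖ * ε₁) ≤ (inner ℝ (gradient g xtilde₁) (xhat₁ - xtilde₁) : ℝ) := by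
      have := real_inner_le_norm (gradient g xtilde₁) (xtilde₁ - xhat₁)
      have h4 : (inner ℝ (gradient g xtilde₁) (xtilde₁ - xhat₁) : ℝ)
          = -(inner ℝ (gradient g xtilde₁) (xhat₁ - xtilde₁) : ℝ) := by
        rw [← inner_neg_right]; congr 1; abel
      have h5 : ‖xtilde₁ - xhat₁‖ ≤ ε₁ := by rwa [norm_sub_rev]
      nlinarith [norm_nonneg (gradient g xtilde₁)]
    linarith
  linarith
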